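/- Let r ≥ 2 and let Γ₁, …, Γ_r be groups in which every finitely generated normal subgroup is either trivial or of finite index. Let G ≤ Γ₁ × ⋯ × Γ_r be a subgroup such that: (a) G is subdirect, i.e. p_i(G) = Γ_i for every coordinate projection p_i; (b) G is full, i.e. the intersection G ∩ Γ_j is nontrivial for every j, where Γ_j is regarded as the subgroup of the product with trivial coordinates away from position j; and (c) for every i the normal subgroup N_i = G ∩ (Γ₁ × ⋯ × Γ_{i−1} × 1 × Γ_{i+1} × ⋯ × Γ_r) of G is finitely generated. Then for all i ≠ j the projection p_{i,j}(G) is a finite index subgroup of Γ_i × Γ_j; in particular G virtually surjects onto pairs. (Group-theoretic content of the proof of Lemma 9.2.) -/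
import Mathlib


/-- Group-theoretic content of the proof of Lemma 9.2: let `Γ₁, …, Γ_r` be groups in which
every finitely generated normal subgroup is trivial or of finite index. If
`G ≤ Γ₁ × ⋯ × Γ_r` is a full subdirect product such that each
`N_i = G ∩ (Γ₁ × ⋯ × 1 × ⋯ × Γ_r)` is finitely generated, then `G` virtually surjects
onto pairs: `p_{i,j}(G)` has finite index in `Γ_i × Γ_j` for all `i ≠ j`. -/
theorem stmt_15 {r : ℕ} (hr : 2 ≤ r) (Γ : Fin r → Type*) [∀ i, Group (Γ i)]
    (hnorm : ∀ i, ∀ N : Subgroup (Γ i), N.Normal → N.FG → N = ⊥ ∨ N.index ≠ 0)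
    (G : Subgroup (∀ i, Γ i))
    (hsubdirect : ∀ i, Subgroup.map (Pi.evalMonoidHom Γ i) G = ⊤)
    (hfull : ∀ j, ∃ g ∈ G, g ≠ 1 ∧ ∀ i, i ≠ j → g i = 1)
    (hfg : ∀ i, (G ⊓ (Pi.evalMonoidHom Γ i).ker).FG) :
    ∀ i j, i ≠ j →
      (Subgroup.map ((Pi.evalMonoidHom Γ i).prod (Pi.evalMonoidHom Γ j)) G).index ≠ 0 := by
  intro i j hij
  classical
  set P : Subgroup (Γ i × Γ j) :=
    Subgroup.map ((Pi.evalMonoidHom Γ i).prod (Pi.evalMonoidHom Γ j)) G with hP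
  set N : Subgroup (∀ k, Γ k) := G ⊓ (Pi.evalMonoidHom Γ j).ker with hNdef
  set M : Subgroup (Γ i) := N.map (Pi.evalMonoidHom Γ i) with hMdef
  have hsurj : ∀ k (γ : Γ k), ∃ g ∈ G, g k = γ := by
    intro k γ
    have h : γ ∈ Subgroup.map (Pi.evalMonoidHom Γ k) G := by
      rw [hsubdirect k]; trivial
    obtain ⟨g, hg, hgk⟩ := h
    exact ⟨g, hg, hgk⟩
  have hMnormal : M.Normal := by
    constructor
    rintro m ⟨n, ⟨hnG, hnker⟩, rfl⟩ γ
    obtain ⟨g, hgG, hgk⟩ := hsurj i γ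
    have h1 : g * n * g⁻¹ ∈ G := mul_mem (mul_mem hgG hnG) (inv_mem hgG)
    have hnj : n j = 1 := hnker
    have h2 : g * n * g⁻¹ ∈ (Pi.evalMonoidHom Γ j).ker := by
      simp [MonoidHom.mem_ker, Pi.evalMonoidHom_apply, hnj]
    refine ⟨g * n * g⁻¹, Subgroup.mem_inf.mpr ⟨h1, h2⟩, ?_⟩
    simp [Pi.evalMonoidHom_apply, hgk]
  have hMfg : M.FG := by
    obtain ⟨S, hS⟩ := hfg j
    exact ⟨S.image (Pi.evalMonoidHom Γ i), by
      rw [Finset.coe_image, ← MonoidHom.map_closure, hS]⟩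
  have hMne : M ≠ ⊥ := by
    obtain ⟨g, hgG, hgne, hgi⟩ := hfull i
    have hgN : g ∈ N := ⟨hgG, by
      simpa [MonoidHom.mem_ker, Pi.evalMonoidHom_apply] using hgi j (Ne.symm hij)⟩
    intro hbot
    have hgiM : g i ∈ M := ⟨g, hgN, rfl⟩
    rw [hbot, Subgroup.mem_bot] at hgiM
    apply hgne
    funext k
    by_cases hk : k = i
    · subst hk; exact hgiM
    · exact hgi k hk
  have hMidx : M.index ≠ 0 := by
    rcases hnorm i M hMnormal hMfg with h | h
    · exact absurd h hMne
    · exact h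
  have hfinM : Finite (Γ i ⧸ M) := by
    have h := Nat.card_ne_zero.mp (by rwa [Subgroup.index] at hMidx)
    exact h.2
  have hMP : ∀ m ∈ M, ((m, 1) : Γ i × Γ j) ∈ P := by
    rintro m ⟨n, ⟨hnG, hnker⟩, rfl⟩
    refine ⟨n, hnG, ?_⟩
    have hnj : (Pi.evalMonoidHom Γ j) n = 1 := hnker
    simp [MonoidHom.prod_apply, hnj]
  let f : Γ i ⧸ M → (Γ i × Γ j) ⧸ P :=
    Quotient.map' (fun a => ((a, 1) : Γ i × Γ j)) (by
      intro a b hab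
      rw [QuotientGroup.leftRel_apply] at hab ⊢
      simpa using hMP _ hab)
  have hfsurj : Function.Surjective f := by
    intro x
    induction x using QuotientGroup.induction_on with
    | H ab =>
      obtain ⟨a, b⟩ := ab
      obtain ⟨g, hgG, hgj⟩ := hsurj j b
      refine ⟨QuotientGroup.mk (a * (g i)⁻¹), ?_⟩
      have : f (QuotientGroup.mk (a * (g i)⁻¹)) =
          QuotientGroup.mk ((a * (g i)⁻¹, 1) : Γ i × Γ j) := rfl
      rw [this, QuotientGroup.eq]
      refine ⟨g, hgG, ?_⟩
      have : ((Pi.evalMonoidHom Γ i).prod (Pi.evalMonoidHom Γ j)) g = (g i, g j) := rfl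
      rw [this]
      ext
      · simp [mul_assoc]
      · simp [hgj]
  have hfin : Finite ((Γ i × Γ j) ⧸ P) := Finite.of_surjective f hfsurj
  rw [Subgroup.index]
  exact Nat.card_ne_zero.mpr ⟨⟨QuotientGroup.mk 1⟩, hfin⟩
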